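/- For every inner function u, the compressed shift A_z^u is irreducible: the only closed subspaces M of K_u satisfying A_z^u M ⊆ M and (A_z^u)* M ⊆ M are {0} and K_u. -/

import Mathlib

noncomputable section

open MeasureTheory Complex Filter Topology Set ContinuousLinearMap
open scoped ENNReal NNReal ComplexConjugate

set_option maxHeartbeats 1000000
set_option synthInstance.maxHeartbeats 1000000

namespace TTOPaper

instance fact2pi : Fact (0 < 2 * Real.pi) := ⟨by positivity⟩

/-- The circle, modelled additively as `ℝ / 2πℤ`. -/
abbrev T2π : Type := AddCircle (2 * Real.pi)

/-- Normalized arc-length (Haar) measure on the circle. -/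
abbrev μ : Measure T2π := AddCircle.haarAddCircle

/-- `L²(𝕋)`. -/
abbrev Ltwo := Lp ℂ 2 μ

/-- The identity function `z ↦ z` on the circle, i.e. `θ ↦ e^{iθ}`. -/
def zfun : T2π → ℂ := fun θ => (AddCircle.toCircle θ : ℂ)

lemma continuous_zfun : Continuous zfun :=
  continuous_subtype_val.comp AddCircle.continuous_toCircle

/-- A continuous function on the (compact) circle is essentially bounded. -/
lemma memLinfty_of_continuous {f : T2π → ℂ} (hf : Continuous f) : MemLp f ⊤ μ :=
  hf.memLp_top_of_hasCompactSupport
    (IsCompact.of_isClosed_subset isCompact_univ (isClosed_tsupport f) (Set.subset_univ _)) μ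

lemma memLinfty_contMap (φ : C(T2π, ℂ)) : MemLp (⇑φ) ⊤ μ :=
  memLinfty_of_continuous φ.continuous

lemma memLinfty_zfun : MemLp zfun ⊤ μ := memLinfty_of_continuous continuous_zfun

/-- Pointwise product of two essentially bounded functions is essentially bounded. -/
lemma memLinfty_mul {φ ψ : T2π → ℂ} (hφ : MemLp φ ⊤ μ) (hψ : MemLp ψ ⊤ μ) :
    MemLp (fun θ => φ θ * ψ θ) ⊤ μ := by
  have h : MemLp (φ • ψ) ⊤ μ := MemLp.smul hψ hφ
  exact h.congr_norm (hφ.1.mul hψ.1) (Filter.Eventually.of_forall fun θ => by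
    simp [Pi.smul_apply', smul_eq_mul])

/-- Complex conjugate of an essentially bounded function is essentially bounded. -/
lemma memLinfty_conj {f : T2π → ℂ} (hf : MemLp f ⊤ μ) :
    MemLp (fun θ => (starRingEnd ℂ) (f θ)) ⊤ μ :=
  hf.congr_norm (Complex.continuous_conj.comp_aestronglyMeasurable hf.1)
    (Filter.Eventually.of_forall fun θ => by simp)

/-- Multiplication operator `M_φ : L² → L²` by an essentially bounded symbol `φ`. -/
def mulCLM (φ : T2π → ℂ) (hφ : MemLp φ ⊤ μ) : Ltwo →L[ℂ] Ltwo :=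
  LinearMap.mkContinuous
    { toFun := fun f => MemLp.toLp (φ • (⇑f : T2π → ℂ)) ((Lp.memLp f).smul hφ)
      map_add' := fun f g => by
        have h1 : (φ • (⇑(f + g) : T2π → ℂ)) =ᵐ[μ]
            (φ • (⇑f : T2π → ℂ)) + (φ • (⇑g : T2π → ℂ)) := by
          filter_upwards [Lp.coeFn_add f g] with x hx
          simp only [Pi.smul_apply', Pi.add_apply, hx, smul_add]
        exact (MemLp.toLp_congr _ (((Lp.memLp f).smul hφ).add
          ((Lp.memLp g).smul hφ)) h1).trans (MemLp.toLp_add _ _)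
      map_smul' := fun c f => by
        have h1 : (φ • (⇑(c • f) : T2π → ℂ)) =ᵐ[μ] c • (φ • (⇑f : T2π → ℂ)) := by
          filter_upwards [Lp.coeFn_smul c f] with x hx
          simp only [Pi.smul_apply', hx, Pi.smul_apply, smul_comm c]
        show MemLp.toLp (φ • (⇑(c • f) : T2π → ℂ)) ((Lp.memLp (c • f)).smul hφ)
            = c • MemLp.toLp (φ • (⇑f : T2π → ℂ)) ((Lp.memLp f).smul hφ)
        rw [MemLp.toLp_congr ((Lp.memLp (c • f)).smul hφ)
          (((Lp.memLp f).smul hφ).const_smul c) h1, MemLp.toLp_const_smul] }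
    (eLpNorm φ ⊤ μ).toReal
    (fun f => by
      simp only [LinearMap.coe_mk, AddHom.coe_mk]
      rw [Lp.norm_toLp, Lp.norm_def, ← ENNReal.toReal_mul]
      exact ENNReal.toReal_mono (ENNReal.mul_ne_top hφ.eLpNorm_ne_top (Lp.eLpNorm_ne_top f))
        (eLpNorm_smul_le_eLpNorm_top_mul_eLpNorm 2 (Lp.aestronglyMeasurable f) φ))

/-- The Hardy space `H²`, as the subspace of `L²` of functions whose Fourier coefficients of
negative index all vanish. -/
def H2 : Submodule ℂ Ltwo where
  carrier := {f : Ltwo | ∀ n : ℤ, n < 0 → fourierCoeff (⇑f) n = 0}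
  add_mem' := by
    intro f g hf hg n hn
    have hf' := hf n hn
    have hg' := hg n hn
    rw [← fourierBasis_repr] at hf' hg' ⊢
    rw [map_add, lp.coeFn_add, Pi.add_apply, hf', hg', add_zero]
  zero_mem' := by
    intro n hn
    rw [← fourierBasis_repr, map_zero]
    simp
  smul_mem' := by
    intro c f hf n hn
    have hf' := hf n hn
    rw [← fourierBasis_repr] at hf' ⊢
    rw [_root_.map_smul, lp.coeFn_smul, Pi.smul_apply, hf', smul_zero]

lemma isClosed_H2 : IsClosed (H2 : Set Ltwo) := by
  have h : (H2 : Set Ltwo) =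
      ⋂ (n : ℤ) (_ : n < 0), {f : Ltwo | (fourierBasis.repr f : ℤ → ℂ) n = 0} := by
    ext f
    simp only [Set.mem_iInter, Set.mem_setOf_eq]
    constructor
    · intro hf n hn; rw [fourierBasis_repr]; exact hf n hn
    · intro hf n hn; rw [← fourierBasis_repr]; exact hf n hn
  rw [h]
  refine isClosed_iInter fun n => isClosed_iInter fun _ => ?_
  have h1 : Continuous fun x : lp (fun _ : ℤ => ℂ) 2 => (x : ℤ → ℂ) n :=
    (continuous_apply n).comp lp.uniformContinuous_coe.continuous
  exact isClosed_eq (h1.comp fourierBasis.repr.continuous) continuous_const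
/-- An inner function: a nonconstant bounded function in `H²` which is unimodular a.e. -/
structure IsInner (u : T2π → ℂ) : Prop where
  meas : AEStronglyMeasurable u μ
  unimodular : ∀ᵐ θ ∂μ, ‖u θ‖ = 1
  negCoeff : ∀ n : ℤ, n < 0 → fourierCoeff u n = 0
  nonconst : ¬ ∃ c : ℂ, u =ᵐ[μ] fun _ => c

lemma IsInner.memLinfty {u : T2π → ℂ} (hu : IsInner u) : MemLp u ⊤ μ :=
  memLp_top_of_bound hu.meas 1 (hu.unimodular.mono fun θ h => by
    rw [h])

/-- The holomorphic extension of a function on the circle to the open unit disk, via the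
power series whose coefficients are the Fourier coefficients of nonnegative index. -/
def extD (u : T2π → ℂ) (z : ℂ) : ℂ := ∑' n : ℕ, fourierCoeff u (n : ℤ) * z ^ n

/-- The spectrum `σ(u)` of an inner function `u`: the set of `λ` in the closed unit disk where
`liminf_{z → λ, z ∈ 𝔻} |u(z)| = 0`. -/
def specU (u : T2π → ℂ) : Set ℂ :=
  {l | l ∈ Metric.closedBall (0 : ℂ) 1 ∧
    Filter.liminf (fun z => ‖extD u z‖) (nhdsWithin l (Metric.ball (0 : ℂ) 1)) = 0}

/-- `σ(u) ∩ 𝕋`, viewed as a subset of the additive circle. -/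
def specT (u : T2π → ℂ) : Set T2π := {θ : T2π | zfun θ ∈ specU u}

/-- The model space `K_u = H² ⊖ uH²`. -/
def KuSub (u : T2π → ℂ) (hu : IsInner u) : Submodule ℂ Ltwo :=
  H2 ⊓ (Submodule.map (mulCLM u hu.memLinfty).toLinearMap H2)ᗮ

lemma isClosed_KuSub (u : T2π → ℂ) (hu : IsInner u) : IsClosed ((KuSub u hu : Set Ltwo)) := by
  have h : (KuSub u hu : Set Ltwo) = (H2 : Set Ltwo) ∩
      ((Submodule.map (mulCLM u hu.memLinfty).toLinearMap H2)ᗮ : Set Ltwo) := rfl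
  rw [h]
  exact isClosed_H2.inter (Submodule.isClosed_orthogonal _)

instance (u : T2π → ℂ) (hu : IsInner u) : CompleteSpace (KuSub u hu) :=
  (isClosed_KuSub u hu).completeSpace_coe

attribute [irreducible] H2 KuSub mulCLM

instance KuNormedAddCommGroup (u : T2π → ℂ) (hu : IsInner u) :
    NormedAddCommGroup (KuSub u hu) := Submodule.normedAddCommGroup _

instance KuInnerProductSpace (u : T2π → ℂ) (hu : IsInner u) :
    InnerProductSpace ℂ (KuSub u hu) := Submodule.innerProductSpace _

instance KuNormedSpace (u : T2π → ℂ) (hu : IsInner u) :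
    NormedSpace ℂ (KuSub u hu) := by infer_instance

instance KuContinuousStar (u : T2π → ℂ) (hu : IsInner u) :
    ContinuousStar (KuSub u hu →L[ℂ] KuSub u hu) :=
  ⟨(ContinuousLinearMap.adjoint (𝕜 := ℂ) (E := KuSub u hu) (F := KuSub u hu)).continuous⟩

/-- The truncated Toeplitz operator `A_φ^u = P_u M_φ |_{K_u}` on the model space `K_u`. -/
def TTOp (u : T2π → ℂ) (hu : IsInner u) (φ : T2π → ℂ) (hφ : MemLp φ ⊤ μ) :
    KuSub u hu →L[ℂ] KuSub u hu :=
  (Submodule.orthogonalProjectionOnto (KuSub u hu)) ∘L (mulCLM φ hφ) ∘L (KuSub u hu).subtypeL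

/-- The compressed shift `A_z^u`. -/
def Az (u : T2π → ℂ) (hu : IsInner u) : KuSub u hu →L[ℂ] KuSub u hu :=
  TTOp u hu zfun memLinfty_zfun

/-- The unital C*-algebra generated by the compressed shift. -/
def CstarAz (u : T2π → ℂ) (hu : IsInner u) :
    StarSubalgebra ℂ (KuSub u hu →L[ℂ] KuSub u hu) :=
  StarAlgebra.elemental ℂ (Az u hu)

/-- The commutator ideal of a C*-algebra of operators, i.e. the smallest closed two-sided
ideal containing all commutators: the closure of the two-sided ideal generated by the
commutators.  Realized here as a subset of the ambient algebra of bounded operators. -/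
def commutatorIdealSet {u : T2π → ℂ} {hu : IsInner u}
    (S : StarSubalgebra ℂ (KuSub u hu →L[ℂ] KuSub u hu)) :
    Set (KuSub u hu →L[ℂ] KuSub u hu) :=
  Subtype.val '' (closure
    ((TwoSidedIdeal.span {x : S | ∃ a b : S, x = a * b - b * a} : TwoSidedIdeal S) : Set S))

/-- The essential spectrum of an operator on `K_u`: the spectrum of its image in the Calkin
algebra, i.e. the set of `z` such that `z - T` is not invertible modulo the compacts. -/
def essSpectrum {u : T2π → ℂ} {hu : IsInner u} (T : KuSub u hu →L[ℂ] KuSub u hu) : Set ℂ :=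
  {z : ℂ | ¬ ∃ S : KuSub u hu →L[ℂ] KuSub u hu,
    IsCompactOperator (⇑(S * (z • (1 : KuSub u hu →L[ℂ] KuSub u hu) - T) - 1)) ∧
    IsCompactOperator (⇑((z • (1 : KuSub u hu →L[ℂ] KuSub u hu) - T) * S - 1))}

/-- The essential norm of an operator on `K_u`: the norm of its image in the Calkin algebra,
i.e. the distance to the ideal of compact operators. -/
def essNorm {u : T2π → ℂ} {hu : IsInner u} (T : KuSub u hu →L[ℂ] KuSub u hu) : ℝ :=
  sInf {c : ℝ | ∃ K : KuSub u hu →L[ℂ] KuSub u hu, IsCompactOperator (⇑K) ∧ c = ‖T - K‖}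


/-! ### Piecewise continuous symbols -/

/-- `φ` has one-sided limits `Lp` (from above) and `Lm` (from below) at the point `ζ` of the
circle, computed in terms of any lift of `ζ` to `ℝ`. -/
def HasOneSidedLimits (φ : T2π → ℂ) (ζ : T2π) (Lp Lm : ℂ) : Prop :=
  ∀ x : ℝ, (x : T2π) = ζ →
    Filter.Tendsto (fun t : ℝ => φ (t : T2π)) (nhdsWithin x (Set.Ioi x)) (nhds Lp) ∧
    Filter.Tendsto (fun t : ℝ => φ (t : T2π)) (nhdsWithin x (Set.Iio x)) (nhds Lm)

/-- A piecewise continuous function on the circle: continuous off a finite set, with one-sided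
limits at each of the exceptional points. -/
def PiecewiseContinuous (φ : T2π → ℂ) : Prop :=
  ∃ F : Finset T2π, ContinuousOn φ ((↑F : Set T2π)ᶜ) ∧
    ∀ ζ ∈ F, ∃ Lp Lm : ℂ, HasOneSidedLimits φ ζ Lp Lm

/-- The function `χ(e^{iθ}) = 1 - θ/(2π)`, `0 ≤ θ < 2π`. -/
def chiFun : T2π → ℂ :=
  fun ζ => 1 - ((((AddCircle.measurableEquivIco (T := 2 * Real.pi) 0 ζ : ℝ) / (2 * Real.pi)) : ℝ) : ℂ)

lemma memLinfty_chiFun : MemLp chiFun ⊤ μ := by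
  have hmeas : Measurable chiFun := by
    have h1 : Measurable fun ζ : T2π => (AddCircle.measurableEquivIco (T := 2 * Real.pi) 0 ζ : ℝ) :=
      measurable_subtype_coe.comp (AddCircle.measurableEquivIco (T := 2 * Real.pi) 0).measurable
    exact (Complex.measurable_ofReal.comp (h1.div_const _)).const_sub 1
  refine memLp_top_of_bound hmeas.aestronglyMeasurable 1 (Filter.Eventually.of_forall fun ζ => ?_)
  set r : ℝ := (AddCircle.measurableEquivIco (T := 2 * Real.pi) 0 ζ : ℝ) with hr
  have hmem : r ∈ Set.Ico (0 : ℝ) (0 + 2 * Real.pi) :=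
    (AddCircle.measurableEquivIco (T := 2 * Real.pi) 0 ζ).2
  have h2π : (0 : ℝ) < 2 * Real.pi := fact2pi.out
  have h0 : 0 ≤ r / (2 * Real.pi) := div_nonneg hmem.1 h2π.le
  have h1' : r / (2 * Real.pi) < 1 := by
    rw [div_lt_one h2π]
    simpa using hmem.2
  have : chiFun ζ = (((1 : ℝ) - r / (2 * Real.pi) : ℝ) : ℂ) := by
    simp [chiFun, hr]
  rw [this, Complex.norm_real, Real.norm_eq_abs, abs_le]
  constructor <;> nlinarith

/-! ### Ingredients for Clark's unitary perturbations -/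

/-- The value `u(0)` of the holomorphic extension of `u` at the origin. -/
def u0 (u : T2π → ℂ) : ℂ := extD u 0

/-- The reproducing kernel `k₀ = 1 - conj(u(0))·u` at the origin, as a function. -/
def k0fun (u : T2π → ℂ) : T2π → ℂ := fun θ => 1 - (starRingEnd ℂ) (u0 u) * u θ

lemma memLinfty_k0fun {u : T2π → ℂ} (hu : IsInner u) : MemLp (k0fun u) ⊤ μ := by
  have hmeas : AEStronglyMeasurable (k0fun u) μ :=
    aestronglyMeasurable_const.sub (hu.meas.const_mul _)
  refine memLp_top_of_bound hmeas (1 + ‖u0 u‖) ?_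
  filter_upwards [hu.unimodular] with θ hθ
  calc ‖1 - (starRingEnd ℂ) (u0 u) * u θ‖
      ≤ ‖(1 : ℂ)‖ + ‖(starRingEnd ℂ) (u0 u) * u θ‖ := norm_sub_le _ _
    _ ≤ 1 + ‖u0 u‖ := by
        rw [norm_mul]
        simp only [norm_one, map_mul]
        rw [Complex.norm_conj, hθ, mul_one]

/-- `Cf(ζ) = u(ζ) ζ̄ conj(f(ζ))`, applied to `k₀`, as a function. -/
def Ck0fun (u : T2π → ℂ) : T2π → ℂ :=
  fun θ => u θ * (starRingEnd ℂ) (zfun θ) * (starRingEnd ℂ) (k0fun u θ)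

lemma memLinfty_Ck0fun {u : T2π → ℂ} (hu : IsInner u) : MemLp (Ck0fun u) ⊤ μ :=
  memLinfty_mul (memLinfty_mul hu.memLinfty (memLinfty_conj memLinfty_zfun))
    (memLinfty_conj (memLinfty_k0fun hu))

/-- `k₀` as an element of the model space (it indeed lies in `K_u`, so that projecting the
corresponding `L²`-function onto `K_u` does not change it). -/
def k0 (u : T2π → ℂ) (hu : IsInner u) : KuSub u hu :=
  Submodule.orthogonalProjectionOnto (KuSub u hu)
    (MemLp.toLp (k0fun u) ((memLinfty_k0fun hu).mono_exponent le_top))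

/-- `Ck₀` as an element of the model space. -/
def Ck0 (u : T2π → ℂ) (hu : IsInner u) : KuSub u hu :=
  Submodule.orthogonalProjectionOnto (KuSub u hu)
    (MemLp.toLp (Ck0fun u) ((memLinfty_Ck0fun hu).mono_exponent le_top))

/-- The rank-one operator `k₀ ⊗ Ck₀ : f ↦ ⟨f, Ck₀⟩ k₀` (the inner product being that of `L²`,
conjugate-linear in `Ck₀`). -/
def rankOneClark (u : T2π → ℂ) (hu : IsInner u) : KuSub u hu →L[ℂ] KuSub u hu :=
  (innerSL ℂ (Ck0 u hu)).smulRight (k0 u hu)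

/-- The Clark perturbation `U_α = A_z^u + (α/(1 - conj(u(0))α)) k₀ ⊗ Ck₀`. -/
def clarkU (u : T2π → ℂ) (hu : IsInner u) (α : ℂ) : KuSub u hu →L[ℂ] KuSub u hu :=
  Az u hu + (α / (1 - (starRingEnd ℂ) (u0 u) * α)) • rankOneClark u hu

/-! ### Complex symmetric operators -/

/-- A conjugation: a conjugate-linear isometric involution. -/
structure IsConjugation {E : Type*} [NormedAddCommGroup E] [InnerProductSpace ℂ E]
    (J : E → E) : Prop where
  map_add : ∀ x y, J (x + y) = J x + J y
  map_smul : ∀ (c : ℂ) (x), J (c • x) = (starRingEnd ℂ) c • J x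
  involutive : ∀ x, J (J x) = x
  inner_map : ∀ x y, (inner ℂ (J x) (J y) : ℂ) = (inner ℂ y x : ℂ)

/-- The block operator matrix `[[0, A], [0, 0]]` on `H ⊕ H` (with the `ℓ²` direct sum norm). -/
def blockOp {H : Type*} [NormedAddCommGroup H] [InnerProductSpace ℂ H] (A : H →L[ℂ] H) :
    WithLp 2 (H × H) →L[ℂ] WithLp 2 (H × H) :=
  (((WithLp.prodContinuousLinearEquiv 2 ℂ H H).symm : (H × H) →L[ℂ] WithLp 2 (H × H)) ∘L
    ((A.comp (ContinuousLinearMap.snd ℂ H H)).prod 0)) ∘L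
    ((WithLp.prodContinuousLinearEquiv 2 ℂ H H) : WithLp 2 (H × H) →L[ℂ] (H × H))


/-! ### The unilateral shift and direct sums -/

/-- `ℓ²(ℕ)`. -/
abbrev ellTwo := lp (fun _ : ℕ => ℂ) 2

/-- The underlying function of the unilateral shift: `(x₀, x₁, …) ↦ (0, x₀, x₁, …)`. -/
def shiftFun (x : ℕ → ℂ) : ℕ → ℂ := fun n => if n = 0 then 0 else x (n - 1)

lemma memℓp_shiftFun (x : ellTwo) : Memℓp (shiftFun (⇑x)) 2 := by
  apply memℓp_gen
  have hs : Summable fun n : ℕ => ‖x n‖ ^ (2 : ℝ≥0∞).toReal :=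
    (lp.memℓp x).summable (by norm_num)
  refine (summable_nat_add_iff 1).mp ?_
  have h : (fun n : ℕ => ‖shiftFun (⇑x) (n + 1)‖ ^ (2 : ℝ≥0∞).toReal)
      = fun n : ℕ => ‖x n‖ ^ (2 : ℝ≥0∞).toReal := by
    funext n; simp [shiftFun]
  rw [h]; exact hs

lemma tsum_shiftFun (x : ellTwo) :
    ∑' n : ℕ, ‖(⟨shiftFun (⇑x), memℓp_shiftFun x⟩ : ellTwo) n‖ ^ (2 : ℝ≥0∞).toReal
      = ∑' n : ℕ, ‖x n‖ ^ (2 : ℝ≥0∞).toReal := by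
  show ∑' n : ℕ, ‖shiftFun (⇑x) n‖ ^ (2 : ℝ≥0∞).toReal = _
  rw [Summable.tsum_eq_zero_add ((memℓp_shiftFun x).summable (by norm_num))]
  have h0 : ‖shiftFun (⇑x) 0‖ ^ (2 : ℝ≥0∞).toReal = 0 := by
    simp [shiftFun, Real.zero_rpow (by norm_num : (2 : ℝ≥0∞).toReal ≠ 0)]
  have h : (fun n : ℕ => ‖shiftFun (⇑x) (n + 1)‖ ^ (2 : ℝ≥0∞).toReal)
      = fun n : ℕ => ‖x n‖ ^ (2 : ℝ≥0∞).toReal := by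
    funext n; simp [shiftFun]
  rw [h0, h, zero_add]

/-- The unilateral shift `S` on `ℓ²(ℕ)`. -/
def shiftS : ellTwo →L[ℂ] ellTwo :=
  LinearMap.mkContinuous
    { toFun := fun x => (⟨shiftFun (⇑x), memℓp_shiftFun x⟩ : ellTwo)
      map_add' := fun x y => by
        apply Subtype.ext
        funext n
        have h1 : (x + y : ellTwo) n = x n + y n := by rw [lp.coeFn_add]; rfl
        show shiftFun (⇑(x + y)) n = shiftFun (⇑x) n + shiftFun (⇑y) n
        by_cases h : n = 0 <;> simp [shiftFun, h, h1]
      map_smul' := fun c x => by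
        apply Subtype.ext
        funext n
        have h1 : (c • x : ellTwo) n = c • x n := by rw [lp.coeFn_smul]; rfl
        show shiftFun (⇑(c • x)) n = c • shiftFun (⇑x) n
        by_cases h : n = 0 <;> simp [shiftFun, h, h1] }
    1
    (fun x => by
      have h2 : (0 : ℝ) < (2 : ℝ≥0∞).toReal := by norm_num
      show ‖(⟨shiftFun (⇑x), memℓp_shiftFun x⟩ : ellTwo)‖ ≤ 1 * ‖x‖
      rw [one_mul, lp.norm_eq_tsum_rpow h2, lp.norm_eq_tsum_rpow h2, tsum_shiftFun x])

/-- The diagonal (componentwise) operator `⊕ᵢ Vᵢ` on an `ℓ²`-direct sum, given a uniform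
bound on the `Vᵢ`. -/
def lpDiag {E : ℕ → Type*} [∀ i, NormedAddCommGroup (E i)] [∀ i, NormedSpace ℂ (E i)]
    (V : ∀ i, E i →L[ℂ] E i) (C : ℝ) (hC : 0 ≤ C) (hV : ∀ i (y : E i), ‖V i y‖ ≤ C * ‖y‖) :
    lp E 2 →L[ℂ] lp E 2 :=
  have h2 : (0 : ℝ) < (2 : ℝ≥0∞).toReal := by norm_num
  have key : ∀ x : lp E 2, Summable fun i => ‖V i (x i)‖ ^ (2 : ℝ≥0∞).toReal := by
    intro x
    refine Summable.of_nonneg_of_le (fun i => Real.rpow_nonneg (norm_nonneg _) _)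
      (fun i => ?_) (((lp.memℓp x).summable h2).mul_left (C ^ (2 : ℝ≥0∞).toReal))
    calc ‖V i (x i)‖ ^ (2 : ℝ≥0∞).toReal
        ≤ (C * ‖x i‖) ^ (2 : ℝ≥0∞).toReal :=
          Real.rpow_le_rpow (norm_nonneg _) (hV i (x i)) h2.le
      _ = C ^ (2 : ℝ≥0∞).toReal * ‖x i‖ ^ (2 : ℝ≥0∞).toReal :=
          Real.mul_rpow hC (norm_nonneg _)
  LinearMap.mkContinuous
    { toFun := fun x => (⟨fun i => V i (x i), memℓp_gen (key x)⟩ : lp E 2)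
      map_add' := fun x y => by
        apply Subtype.ext
        funext i
        have h1 : (x + y : lp E 2) i = x i + y i := by rw [lp.coeFn_add]; rfl
        show V i ((x + y : lp E 2) i) = V i (x i) + V i (y i)
        rw [h1, map_add]
      map_smul' := fun c x => by
        apply Subtype.ext
        funext i
        have h1 : (c • x : lp E 2) i = c • x i := by rw [lp.coeFn_smul]; rfl
        show V i ((c • x : lp E 2) i) = c • V i (x i)
        rw [h1, _root_.map_smul] }
    C
    (fun x => by
      show ‖(⟨fun i => V i (x i), memℓp_gen (key x)⟩ : lp E 2)‖ ≤ C * ‖x‖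
      rw [lp.norm_eq_tsum_rpow h2, lp.norm_eq_tsum_rpow h2]
      have hsum := (lp.memℓp x).summable h2
      have hineq : ∑' i, ‖(⟨fun i => V i (x i), memℓp_gen (key x)⟩ : lp E 2) i‖
            ^ (2 : ℝ≥0∞).toReal
          ≤ C ^ (2 : ℝ≥0∞).toReal * ∑' i, ‖x i‖ ^ (2 : ℝ≥0∞).toReal := by
        rw [← tsum_mul_left]
        refine Summable.tsum_le_tsum (fun i => ?_) (key x) (hsum.mul_left _)
        calc ‖V i (x i)‖ ^ (2 : ℝ≥0∞).toReal
            ≤ (C * ‖x i‖) ^ (2 : ℝ≥0∞).toReal :=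
              Real.rpow_le_rpow (norm_nonneg _) (hV i (x i)) h2.le
          _ = C ^ (2 : ℝ≥0∞).toReal * ‖x i‖ ^ (2 : ℝ≥0∞).toReal :=
              Real.mul_rpow hC (norm_nonneg _)
      calc (∑' i, ‖(⟨fun i => V i (x i), memℓp_gen (key x)⟩ : lp E 2) i‖
            ^ (2 : ℝ≥0∞).toReal) ^ (1 / (2 : ℝ≥0∞).toReal)
          ≤ (C ^ (2 : ℝ≥0∞).toReal * ∑' i, ‖x i‖ ^ (2 : ℝ≥0∞).toReal)
              ^ (1 / (2 : ℝ≥0∞).toReal) := by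
            refine Real.rpow_le_rpow ?_ hineq (by positivity)
            exact tsum_nonneg fun i => Real.rpow_nonneg (norm_nonneg _) _
        _ = C * (∑' i, ‖x i‖ ^ (2 : ℝ≥0∞).toReal) ^ (1 / (2 : ℝ≥0∞).toReal) := by
            rw [Real.mul_rpow (Real.rpow_nonneg hC _)
              (tsum_nonneg fun i => Real.rpow_nonneg (norm_nonneg _) _)]
            rw [← Real.rpow_mul hC, mul_one_div_cancel (ne_of_gt h2), Real.rpow_one])


/-- The Hankel-type operator `H_f^u : K_u → L²`, `g ↦ (I - P_u)(f·g)`. -/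
def hankel (u : T2π → ℂ) (hu : IsInner u) (f : T2π → ℂ) (hf : MemLp f ⊤ μ) :
    KuSub u hu →L[ℂ] Ltwo :=
  ((ContinuousLinearMap.id ℂ Ltwo - (KuSub u hu).subtypeL ∘L Submodule.orthogonalProjectionOnto (KuSub u hu)) ∘L
    mulCLM f hf) ∘L (KuSub u hu).subtypeL

/-- `S ⊕ S*` on `ℓ² ⊕ ℓ²`. -/
def sOplusSstar : WithLp 2 (ellTwo × ellTwo) →L[ℂ] WithLp 2 (ellTwo × ellTwo) :=
  (((WithLp.prodContinuousLinearEquiv 2 ℂ ellTwo ellTwo).symm :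
      (ellTwo × ellTwo) →L[ℂ] WithLp 2 (ellTwo × ellTwo)) ∘L
    (shiftS.prodMap (ContinuousLinearMap.adjoint shiftS))) ∘L
    ((WithLp.prodContinuousLinearEquiv 2 ℂ ellTwo ellTwo) :
      WithLp 2 (ellTwo × ellTwo) →L[ℂ] (ellTwo × ellTwo))

/-- `⊕_{i=1}^∞ (S ⊕ S*)` on the `ℓ²`-direct sum of countably many copies of `ℓ² ⊕ ℓ²`. -/
def bigDirectSum :
    lp (fun _ : ℕ => WithLp 2 (ellTwo × ellTwo)) 2 →L[ℂ]
      lp (fun _ : ℕ => WithLp 2 (ellTwo × ellTwo)) 2 :=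
  lpDiag (fun _ => sOplusSstar) ‖sOplusSstar‖ (norm_nonneg _)
    (fun _ y => ContinuousLinearMap.le_opNorm _ y)


/-! ### Auxiliary results for the irreducibility of the compressed shift -/


local notation "⟪" x ", " y "⟫" => @inner ℂ _ _ x y

/-- Fourier basis vectors as elements of `Ltwo`. -/
abbrev eF (n : ℤ) : Ltwo := fourierLp 2 n

lemma inner_eF (n : ℤ) (f : Ltwo) : ⟪eF n, f⟫ = fourierCoeff (⇑f) n := by
  rw [← fourierBasis_repr, fourierBasis.repr_apply_apply, coe_fourierBasis, eF]

unseal H2 in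
lemma mem_H2_iff {f : Ltwo} : f ∈ H2 ↔ ∀ n : ℤ, n < 0 → fourierCoeff (⇑f) n = 0 :=
  Iff.rfl

lemma mem_H2_iff' {f : Ltwo} : f ∈ H2 ↔ ∀ n : ℤ, n < 0 → ⟪eF n, f⟫ = 0 := by
  simp only [mem_H2_iff, inner_eF]

unseal mulCLM in
lemma mulCLM_coeFn (φ : T2π → ℂ) (hφ : MemLp φ ⊤ μ) (f : Ltwo) :
    ⇑(mulCLM φ hφ f) =ᵐ[μ] fun θ => φ θ * f θ := by
  show ⇑(MemLp.toLp (φ • (⇑f : T2π → ℂ)) ((Lp.memLp f).smul hφ)) =ᵐ[μ] _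
  filter_upwards [MemLp.coeFn_toLp ((Lp.memLp f).smul (r := 2) hφ)] with θ h
  rw [h]; simp [Pi.smul_apply', smul_eq_mul]

example : True := trivial

lemma mulCLM_congr {φ ψ : T2π → ℂ} (hφ : MemLp φ ⊤ μ) (hψ : MemLp ψ ⊤ μ)
    (h : ∀ θ, φ θ = ψ θ) (f : Ltwo) : mulCLM φ hφ f = mulCLM ψ hψ f := by
  refine Lp.ext ?_
  filter_upwards [mulCLM_coeFn φ hφ f, mulCLM_coeFn ψ hψ f] with θ h1 h2
  rw [h1, h2, h θ]

lemma inner_mulCLM_left (φ : T2π → ℂ) (hφ : MemLp φ ⊤ μ) (f g : Ltwo) :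
    ⟪mulCLM φ hφ f, g⟫ =
      ⟪f, mulCLM (fun θ => conj (φ θ)) (memLinfty_conj hφ) g⟫ := by
  rw [MeasureTheory.L2.inner_def, MeasureTheory.L2.inner_def]
  refine integral_congr_ae ?_
  filter_upwards [mulCLM_coeFn φ hφ f, mulCLM_coeFn _ (memLinfty_conj hφ) g] with θ h1 h2
  rw [h1, h2]
  simp only [RCLike.inner_apply, map_mul, RingHom.coe_coe]
  ring

lemma mulCLM_mulCLM (φ ψ : T2π → ℂ) (hφ : MemLp φ ⊤ μ) (hψ : MemLp ψ ⊤ μ) (f : Ltwo) :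
    mulCLM φ hφ (mulCLM ψ hψ f) = mulCLM (fun θ => φ θ * ψ θ) (memLinfty_mul hφ hψ) f := by
  refine Lp.ext ?_
  filter_upwards [mulCLM_coeFn φ hφ (mulCLM ψ hψ f), mulCLM_coeFn ψ hψ f,
    mulCLM_coeFn _ (memLinfty_mul hφ hψ) f] with θ h1 h2 h3
  rw [h1, h2, h3, mul_assoc]

lemma zfun_eq (θ : T2π) : zfun θ = fourier 1 θ := by rw [fourier_one]; rfl

lemma conj_zfun_eq (θ : T2π) : conj (zfun θ) = fourier (-1) θ := by
  rw [fourier_neg, zfun_eq]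

lemma mulCLM_zfun_eF (n : ℤ) : mulCLM zfun memLinfty_zfun (eF n) = eF (n + 1) := by
  refine Lp.ext ?_
  filter_upwards [mulCLM_coeFn zfun memLinfty_zfun (eF n), coeFn_fourierLp 2 n,
    coeFn_fourierLp 2 (n + 1)] with θ h1 h2 h3
  show _ = (⇑(eF (n+1)) : T2π → ℂ) θ
  rw [h1, h3]
  show zfun θ * (⇑(eF n) : T2π → ℂ) θ = _
  rw [h2, zfun_eq, ← fourier_add, add_comm]

lemma mulCLM_conj_zfun_eF (n : ℤ) :
    mulCLM (fun θ => conj (zfun θ)) (memLinfty_conj memLinfty_zfun) (eF n) = eF (n - 1) := by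
  refine Lp.ext ?_
  filter_upwards [mulCLM_coeFn _ (memLinfty_conj memLinfty_zfun) (eF n), coeFn_fourierLp 2 n,
    coeFn_fourierLp 2 (n - 1)] with θ h1 h2 h3
  show _ = (⇑(eF (n-1)) : T2π → ℂ) θ
  rw [h1, h3]
  show conj (zfun θ) * (⇑(eF n) : T2π → ℂ) θ = _
  rw [h2, conj_zfun_eq, ← fourier_add]
  norm_num [sub_eq_add_neg, add_comm]

lemma mulCLM_zfun_conj_zfun (f : Ltwo) :
    mulCLM zfun memLinfty_zfun
      (mulCLM (fun θ => conj (zfun θ)) (memLinfty_conj memLinfty_zfun) f) = f := by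
  rw [mulCLM_mulCLM]
  refine Lp.ext ?_
  filter_upwards [mulCLM_coeFn _ (memLinfty_mul memLinfty_zfun (memLinfty_conj memLinfty_zfun)) f]
    with θ h1
  rw [h1, conj_zfun_eq, zfun_eq, ← fourier_add]
  norm_num

lemma inner_eF_mulCLM_eF (φ : T2π → ℂ) (hφ : MemLp φ ⊤ μ) (n m : ℤ) :
    ⟪eF n, mulCLM φ hφ (eF m)⟫ = fourierCoeff φ (n - m) := by
  rw [MeasureTheory.L2.inner_def, fourierCoeff]
  refine integral_congr_ae ?_
  filter_upwards [coeFn_fourierLp 2 n, mulCLM_coeFn φ hφ (eF m), coeFn_fourierLp 2 m]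
    with θ h1 h2 h3
  show (inner ℂ ((⇑(eF n) : T2π → ℂ) θ) _ : ℂ) = _
  rw [RCLike.inner_apply, h1, h2]
  show (φ θ * (⇑(eF m) : T2π → ℂ) θ) * _ = _
  rw [h3, ← fourier_neg, smul_eq_mul,
    show -(n - m) = -n + m by ring, fourier_add]
  ring

lemma fourierCoeff_eF (m n : ℤ) : fourierCoeff (⇑(eF m)) n = if n = m then 1 else 0 := by
  rw [← inner_eF]
  exact orthonormal_iff_ite.mp orthonormal_fourier n m

lemma eF_mem_H2 {n : ℤ} (hn : 0 ≤ n) : eF n ∈ H2 := by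
  rw [mem_H2_iff]
  intro m hm
  rw [fourierCoeff_eF, if_neg (by omega)]

lemma inner_eq_zero_of_H2 {w f : Ltwo} (hf : f ∈ H2)
    (h : ∀ m : ℤ, 0 ≤ m → ⟪w, eF m⟫ = 0) : ⟪w, f⟫ = 0 := by
  have hs := fourierBasis.hasSum_repr f
  have h2 : HasSum (fun i : ℤ => (fourierBasis.repr f i) • ⟪w, fourierBasis i⟫)
      ⟪w, f⟫ := by
    simpa only [innerSL_apply_apply, inner_smul_right, smul_eq_mul]
      using hs.mapL (innerSL ℂ w)
  have h3 : (fun i : ℤ => (fourierBasis.repr f i) • ⟪w, fourierBasis i⟫)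
      = fun _ => (0 : ℂ) := by
    funext i
    rcases lt_or_ge i 0 with hi | hi
    · rw [fourierBasis_repr, mem_H2_iff.mp hf i hi, zero_smul]
    · have : (fourierBasis (T := 2 * Real.pi) i : Ltwo) = eF i := by
        rw [coe_fourierBasis]
      rw [this, h i hi, smul_zero]
  rw [h3] at h2
  exact h2.unique hasSum_zero

lemma inner_eF_mulCLM_u {u : T2π → ℂ} (hu : IsInner u) {h : Ltwo} (hh : h ∈ H2)
    {n : ℤ} (hn : n < 0) : ⟪eF n, mulCLM u hu.memLinfty h⟫ = 0 := by
  have e1 : ⟪mulCLM (fun θ => conj (u θ)) (memLinfty_conj hu.memLinfty) (eF n), h⟫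
      = ⟪eF n, mulCLM u hu.memLinfty h⟫ := by
    rw [inner_mulCLM_left]
    congr 1
    exact mulCLM_congr _ _ (fun θ => by simp) h
  rw [← e1]
  refine inner_eq_zero_of_H2 hh fun m hm => ?_
  rw [inner_mulCLM_left]
  rw [mulCLM_congr (memLinfty_conj (memLinfty_conj hu.memLinfty)) hu.memLinfty
    (fun θ => by simp) (eF m)]
  rw [inner_eF_mulCLM_eF]
  exact hu.negCoeff _ (by omega)

lemma mulCLM_u_mem_H2 {u : T2π → ℂ} (hu : IsInner u) {h : Ltwo} (hh : h ∈ H2) :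
    mulCLM u hu.memLinfty h ∈ H2 :=
  mem_H2_iff'.mpr fun n hn => inner_eF_mulCLM_u hu hh hn

lemma mulCLM_zfun_mem_H2 {f : Ltwo} (hf : f ∈ H2) :
    mulCLM zfun memLinfty_zfun f ∈ H2 := by
  refine mem_H2_iff'.mpr fun n hn => ?_
  rw [← inner_conj_symm, inner_mulCLM_left, mulCLM_conj_zfun_eF, inner_conj_symm]
  exact mem_H2_iff'.mp hf _ (by omega)

unseal KuSub in
lemma mem_KuSub_iff {u : T2π → ℂ} {hu : IsInner u} {x : Ltwo} :
    x ∈ KuSub u hu ↔ x ∈ H2 ∧ ∀ h ∈ H2, ⟪mulCLM u hu.memLinfty h, x⟫ = 0 := by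
  show x ∈ H2 ⊓ _ ↔ _
  rw [Submodule.mem_inf, Submodule.mem_orthogonal]
  refine and_congr_right fun _ => ⟨fun H h hh => H _ ⟨h, hh, rfl⟩, fun H y hy => ?_⟩
  obtain ⟨h, hh, rfl⟩ := hy
  exact H h hh

section K
variable {u : T2π → ℂ} {hu : IsInner u}

lemma mem_H2_of_mem_KuSub {x : Ltwo} (hx : x ∈ KuSub u hu) : x ∈ H2 :=
  (mem_KuSub_iff.mp hx).1

lemma eF_neg_mem_orthogonal {n : ℤ} (hn : n < 0) : eF n ∈ (KuSub u hu)ᗮ := by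
  rw [Submodule.mem_orthogonal]
  intro y hy
  rw [← inner_conj_symm, inner_eF, mem_H2_iff.mp (mem_H2_of_mem_KuSub hy) n hn, map_zero]

lemma mulCLM_u_mem_orthogonal {h : Ltwo} (hh : h ∈ H2) :
    mulCLM u hu.memLinfty h ∈ (KuSub u hu)ᗮ := by
  rw [Submodule.mem_orthogonal]
  intro y hy
  rw [← inner_conj_symm, (mem_KuSub_iff.mp hy).2 h hh, map_zero]

/-- The closure of `uH²` in `L²`. -/
def Nsub (u : T2π → ℂ) (hu : IsInner u) : Submodule ℂ Ltwo :=
  (Submodule.map (mulCLM u hu.memLinfty).toLinearMap H2).topologicalClosure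

lemma Nsub_le_H2 : Nsub u hu ≤ H2 := by
  refine Submodule.topologicalClosure_minimal _ ?_ isClosed_H2
  rintro x ⟨h, hh, rfl⟩
  exact mulCLM_u_mem_H2 hu hh

lemma Nsub_le_orthogonal : Nsub u hu ≤ (KuSub u hu)ᗮ := by
  refine Submodule.topologicalClosure_minimal _ ?_ (Submodule.isClosed_orthogonal _)
  rintro x ⟨h, hh, rfl⟩
  exact mulCLM_u_mem_orthogonal hh

lemma proj_KuSub_eq_zero {w : Ltwo} (hw : w ∈ (KuSub u hu)ᗮ) :
    Submodule.orthogonalProjectionOnto (KuSub u hu) w = 0 :=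
  Submodule.orthogonalProjectionOnto_apply_of_mem_orthogonal hw

lemma mulCLM_zfun_mem_Nsub {w : Ltwo} (hw : w ∈ Nsub u hu) :
    mulCLM zfun memLinfty_zfun w ∈ Nsub u hu := by
  have hcont : Continuous (mulCLM zfun memLinfty_zfun) := (mulCLM zfun memLinfty_zfun).continuous
  have hmaps : Set.MapsTo (mulCLM zfun memLinfty_zfun)
      ((Submodule.map (mulCLM u hu.memLinfty).toLinearMap H2 : Submodule ℂ Ltwo) : Set Ltwo)
      ((Submodule.map (mulCLM u hu.memLinfty).toLinearMap H2 : Submodule ℂ Ltwo) : Set Ltwo) := by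
    rintro x ⟨h, hh, rfl⟩
    refine ⟨mulCLM zfun memLinfty_zfun h, mulCLM_zfun_mem_H2 hh, ?_⟩
    show mulCLM u hu.memLinfty (mulCLM zfun memLinfty_zfun h)
        = mulCLM zfun memLinfty_zfun (mulCLM u hu.memLinfty h)
    rw [mulCLM_mulCLM, mulCLM_mulCLM]
    exact mulCLM_congr _ _ (fun θ => mul_comm _ _) h
  exact map_mem_closure hcont hw hmaps

lemma sub_proj_mem_Nsub {x : Ltwo} (hx : x ∈ H2) :
    x - ↑(Submodule.orthogonalProjectionOnto (KuSub u hu) x) ∈ Nsub u hu := by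
  haveI : CompleteSpace (Nsub u hu) :=
    (Submodule.isClosed_topologicalClosure _).completeSpace_coe
  set r := x - ↑(Submodule.orthogonalProjectionOnto (KuSub u hu) x) with hr
  have hrK : r ∈ (KuSub u hu)ᗮ := Submodule.sub_starProjection_mem_orthogonal x
  have hrH2 : r ∈ H2 := Submodule.sub_mem _ hx
    (mem_H2_of_mem_KuSub (Submodule.orthogonalProjectionOnto (KuSub u hu) x).2)
  set s := r - ↑(Submodule.orthogonalProjectionOnto (Nsub u hu) r) with hs
  have hsN : s ∈ (Nsub u hu)ᗮ := Submodule.sub_starProjection_mem_orthogonal r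
  have hsK : s ∈ KuSub u hu := by
    refine mem_KuSub_iff.mpr ⟨Submodule.sub_mem _ hrH2
      (Nsub_le_H2 (Submodule.orthogonalProjectionOnto (Nsub u hu) r).2), fun h hh => ?_⟩
    exact (Submodule.mem_orthogonal _ _).mp hsN _
      (Submodule.le_topologicalClosure _ ⟨h, hh, rfl⟩)
  have hzero : s = 0 := by
    rw [← inner_self_eq_zero (𝕜 := ℂ) (x := s), hs]
    rw [inner_sub_right]
    rw [(Submodule.mem_orthogonal _ _).mp hrK s hsK]
    rw [← inner_conj_symm, (Submodule.mem_orthogonal _ _).mp hsN _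
      (Submodule.orthogonalProjectionOnto (Nsub u hu) r).2, map_zero, sub_zero]
  have : r = ↑(Submodule.orthogonalProjectionOnto (Nsub u hu) r) := by
    rw [← sub_eq_zero]; exact hzero
  rw [this]
  exact (Submodule.orthogonalProjectionOnto (Nsub u hu) r).2

end K

section K2
variable {u : T2π → ℂ} {hu : IsInner u}

lemma TTOp_apply (φ : T2π → ℂ) (hφ : MemLp φ ⊤ μ) (f : KuSub u hu) :
    TTOp u hu φ hφ f = Submodule.orthogonalProjectionOnto (KuSub u hu) (mulCLM φ hφ ↑f) := rfl

lemma Az_apply (f : KuSub u hu) :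
    Az u hu f = Submodule.orthogonalProjectionOnto (KuSub u hu) (mulCLM zfun memLinfty_zfun ↑f) := rfl

lemma Az_adjoint :
    ContinuousLinearMap.adjoint (Az u hu)
      = TTOp u hu (fun θ => conj (zfun θ)) (memLinfty_conj memLinfty_zfun) := by
  refine ((ContinuousLinearMap.eq_adjoint_iff _ _).mpr fun x y => ?_).symm
  rw [TTOp_apply, Submodule.inner_orthogonalProjectionOnto_eq_of_mem_right, inner_mulCLM_left,
    mulCLM_congr (memLinfty_conj (memLinfty_conj memLinfty_zfun)) memLinfty_zfun
      (fun θ => by simp) (↑y), Az_apply, Submodule.inner_orthogonalProjectionOnto_eq_of_mem_left]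

/-- Projections of the monomials. -/
def pK (u : T2π → ℂ) (hu : IsInner u) (n : ℤ) : KuSub u hu :=
  Submodule.orthogonalProjectionOnto (KuSub u hu) (eF n)

lemma Az_pK {n : ℤ} (hn : 0 ≤ n) : Az u hu (pK u hu n) = pK u hu (n + 1) := by
  have hdec : eF n - ↑(pK u hu n) ∈ Nsub u hu := sub_proj_mem_Nsub (eF_mem_H2 hn)
  have hsplit : mulCLM zfun memLinfty_zfun (↑(pK u hu n) : Ltwo)
      = eF (n + 1) - mulCLM zfun memLinfty_zfun (eF n - ↑(pK u hu n)) := by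
    rw [map_sub, mulCLM_zfun_eF, sub_sub_cancel]
  rw [Az_apply, hsplit, map_sub, proj_KuSub_eq_zero
    (Nsub_le_orthogonal (mulCLM_zfun_mem_Nsub hdec)), sub_zero, pK]

lemma u0_eq : u0 u = fourierCoeff u 0 := by
  rw [u0, extD, tsum_eq_single 0 (fun b hb => by simp [zero_pow hb])]
  simp

lemma k0Lp_eq : (MemLp.toLp (k0fun u) ((memLinfty_k0fun hu).mono_exponent le_top))
    = eF 0 - conj (u0 u) • mulCLM u hu.memLinfty (eF 0) := by
  refine Lp.ext ?_
  filter_upwards [MemLp.coeFn_toLp ((memLinfty_k0fun hu).mono_exponent le_top),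
    Lp.coeFn_sub (eF 0) (conj (u0 u) • mulCLM u hu.memLinfty (eF 0)),
    Lp.coeFn_smul (conj (u0 u)) (mulCLM u hu.memLinfty (eF 0)),
    mulCLM_coeFn u hu.memLinfty (eF 0), coeFn_fourierLp 2 0] with θ h1 h2 h3 h4 h5
  rw [h1, h2, Pi.sub_apply, h3, Pi.smul_apply, h4, h5, fourier_zero]
  simp [k0fun]

lemma k0_eq_pK : k0 u hu = pK u hu 0 := by
  rw [k0, k0Lp_eq (hu := hu), map_sub, _root_.map_smul,
    proj_KuSub_eq_zero (mulCLM_u_mem_orthogonal (eF_mem_H2 le_rfl)), smul_zero, sub_zero, pK]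

end K2

section K3
variable {u : T2π → ℂ} {hu : IsInner u}

lemma mulCLM_u_zfun_comm (h : Ltwo) :
    mulCLM zfun memLinfty_zfun (mulCLM u hu.memLinfty h)
      = mulCLM u hu.memLinfty (mulCLM zfun memLinfty_zfun h) := by
  rw [mulCLM_mulCLM, mulCLM_mulCLM]
  exact mulCLM_congr _ _ (fun θ => mul_comm _ _) h

lemma inner_eF_mulCLM_conj_zfun (n : ℤ) (F : Ltwo) :
    ⟪eF n, mulCLM (fun θ => conj (zfun θ)) (memLinfty_conj memLinfty_zfun) F⟫
      = ⟪eF (n + 1), F⟫ := by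
  rw [← inner_conj_symm, inner_mulCLM_left,
    mulCLM_congr (memLinfty_conj (memLinfty_conj memLinfty_zfun)) memLinfty_zfun
      (fun θ => by simp) (eF n), mulCLM_zfun_eF, inner_conj_symm]

lemma rankOne_identity (f : KuSub u hu) :
    f - Az u hu (ContinuousLinearMap.adjoint (Az u hu) f)
      = (inner (𝕜 := ℂ) (k0 u hu) f) • k0 u hu := by
  set F : Ltwo := (↑f : Ltwo) with hF
  set c : ℂ := ⟪eF 0, F⟫ with hc
  set G : Ltwo := mulCLM (fun θ => conj (zfun θ)) (memLinfty_conj memLinfty_zfun) F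
      - c • eF (-1) with hG
  have hGmem : G ∈ KuSub u hu := by
    refine mem_KuSub_iff.mpr ⟨mem_H2_iff'.mpr fun n hn => ?_, fun h hh => ?_⟩
    · rw [hG, inner_sub_right, inner_smul_right, inner_eF_mulCLM_conj_zfun,
        orthonormal_iff_ite.mp orthonormal_fourier n (-1)]
      rcases eq_or_lt_of_le (show n ≤ -1 by omega) with h1 | h1
      · rw [if_pos (by omega), mul_one, h1]
        show ⟪eF 0, F⟫ - c = 0
        rw [← hc, sub_self]
      · rw [if_neg (by omega), mul_zero, sub_zero, inner_eF,
          mem_H2_iff.mp (mem_H2_of_mem_KuSub f.2) (n + 1) (by omega)]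
    · rw [hG, inner_sub_right, inner_smul_right]
      have h0 : ⟪F, mulCLM u hu.memLinfty (mulCLM zfun memLinfty_zfun h)⟫ = 0 := by
        have h1 := (mem_KuSub_iff (hu := hu) (x := (↑f : Ltwo))).mp f.2
        have h2 := h1.2 (mulCLM zfun memLinfty_zfun h) (mulCLM_zfun_mem_H2 hh)
        rw [← inner_conj_symm, h2, map_zero]
      have e1 : ⟪mulCLM u hu.memLinfty h,
          mulCLM (fun θ => conj (zfun θ)) (memLinfty_conj memLinfty_zfun) F⟫ = 0 := by
        rw [← inner_conj_symm, inner_mulCLM_left,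
          mulCLM_congr (memLinfty_conj (memLinfty_conj memLinfty_zfun)) memLinfty_zfun
            (fun θ => by simp) _, mulCLM_u_zfun_comm (hu := hu), h0, map_zero]
      have e2 : ⟪mulCLM u hu.memLinfty h, eF (-1)⟫ = 0 := by
        rw [← inner_conj_symm, inner_eF_mulCLM_u hu hh (by omega), map_zero]
      rw [e1, e2, mul_zero, sub_zero]
  have hadj : ContinuousLinearMap.adjoint (Az u hu) f = ⟨G, hGmem⟩ := by
    rw [Az_adjoint, TTOp_apply]
    have : mulCLM (fun θ => conj (zfun θ)) (memLinfty_conj memLinfty_zfun) F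
        = G + c • eF (-1) := by rw [hG, sub_add_cancel]
    rw [show (↑f : Ltwo) = F from rfl, this, map_add, _root_.map_smul,
      proj_KuSub_eq_zero (eF_neg_mem_orthogonal (by omega)), smul_zero, add_zero]
    exact Submodule.orthogonalProjectionOnto_mem_subspace_eq_self (⟨G, hGmem⟩ : KuSub u hu)
  have hmul : mulCLM zfun memLinfty_zfun G = F - c • eF 0 := by
    rw [hG, map_sub, _root_.map_smul, mulCLM_zfun_conj_zfun, mulCLM_zfun_eF]
    norm_num
  have hAz : Az u hu (ContinuousLinearMap.adjoint (Az u hu) f) = f - c • k0 u hu := by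
    rw [hadj, Az_apply]
    show Submodule.orthogonalProjectionOnto (KuSub u hu) (mulCLM zfun memLinfty_zfun G) = _
    rw [hmul, map_sub, _root_.map_smul, k0_eq_pK, pK]
    congr 1
    exact Submodule.orthogonalProjectionOnto_mem_subspace_eq_self f
  rw [hAz, sub_sub_cancel, k0_eq_pK]
  congr 1
  rw [pK]
  exact (Submodule.inner_orthogonalProjectionOnto_eq_of_mem_right (K := KuSub u hu) f (eF 0)).symm

end K3

lemma fourierCoeff_congr_ae {f g : T2π → ℂ} (h : f =ᵐ[μ] g) (n : ℤ) :
    fourierCoeff f n = fourierCoeff g n := by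
  rw [fourierCoeff, fourierCoeff]
  exact integral_congr_ae (h.mono fun θ hθ => by dsimp only; rw [hθ])

lemma eq_zero_of_fourierCoeff_eq_zero {f : Ltwo} (h : ∀ n : ℤ, fourierCoeff (⇑f) n = 0) :
    f = 0 := by
  apply fourierBasis.repr.injective
  rw [map_zero]
  apply Subtype.ext
  funext n
  show (fourierBasis.repr f : ℤ → ℂ) n = (0 : ℤ → ℂ) n
  rw [fourierBasis_repr, h n]
  rfl

lemma fourierCoeff_conj (g : T2π → ℂ) (hg : AEStronglyMeasurable g μ)
    (hgi : Integrable g μ) (n : ℤ) :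
    fourierCoeff (fun θ => conj (g θ)) n = conj (fourierCoeff g (-n)) := by
  rw [fourierCoeff, fourierCoeff, ← integral_conj]
  refine integral_congr_ae (Eventually.of_forall fun θ => ?_)
  simp only [smul_eq_mul, map_mul, neg_neg, ← fourier_neg]

section K4
variable {u : T2π → ℂ} {hu : IsInner u}

lemma u_coeff_exists_ne (hu : IsInner u) : ¬ (∀ n : ℤ, n ≠ 0 → fourierCoeff u n = 0) := by
  intro hcoeff
  set c : ℂ := fourierCoeff u 0 with hc
  set uLp : Ltwo := MemLp.toLp u (hu.memLinfty.mono_exponent le_top) with huLp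
  have hcu : ⇑uLp =ᵐ[μ] u := MemLp.coeFn_toLp _
  have hf : uLp - c • eF 0 = 0 := by
    refine eq_zero_of_fourierCoeff_eq_zero fun n => ?_
    rw [← inner_eF, inner_sub_right, inner_smul_right, inner_eF, inner_eF,
      fourierCoeff_congr_ae hcu, fourierCoeff_eF]
    rcases eq_or_ne n 0 with rfl | hn
    · rw [if_pos rfl, mul_one, ← hc, sub_self]
    · rw [if_neg hn, mul_zero, hcoeff n hn, sub_zero]
  refine hu.nonconst ⟨c, ?_⟩
  have h0 : uLp = c • eF 0 := by rwa [sub_eq_zero] at hf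
  have h1 : ⇑uLp =ᵐ[μ] fun _ => c := by
    rw [h0]
    filter_upwards [Lp.coeFn_smul c (eF 0), coeFn_fourierLp 2 0] with θ h1 h2
    rw [h1, Pi.smul_apply, h2, fourier_zero, smul_eq_mul, mul_one]
  exact hcu.symm.trans h1

lemma mulCLM_conj_u_mulCLM_u (h : Ltwo) :
    mulCLM (fun θ => conj (u θ)) (memLinfty_conj hu.memLinfty)
      (mulCLM u hu.memLinfty h) = h := by
  rw [mulCLM_mulCLM]
  refine Lp.ext ?_
  filter_upwards [mulCLM_coeFn _ (memLinfty_mul (memLinfty_conj hu.memLinfty) hu.memLinfty) h,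
    hu.unimodular] with θ h1 h2
  rw [h1]
  have : conj (u θ) * u θ = 1 := by
    rw [mul_comm, Complex.mul_conj, Complex.normSq_eq_norm_sq, h2]
    norm_num
  rw [this, one_mul]

lemma k0_ne_zero (hu : IsInner u) : k0 u hu ≠ 0 := by
  intro h0
  -- then `eF 0 ∈ Nsub`, so `conj u ∈ H2`, so all nonzero coefficients of `u` vanish
  have h1 : eF 0 ∈ Nsub u hu := by
    have := sub_proj_mem_Nsub (hu := hu) (eF_mem_H2 (le_refl (0:ℤ)))
    rw [show Submodule.orthogonalProjectionOnto (KuSub u hu) (eF 0) = pK u hu 0 from rfl, ← k0_eq_pK, h0] at this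
    simpa using this
  have h2 : mulCLM (fun θ => conj (u θ)) (memLinfty_conj hu.memLinfty) (eF 0) ∈ H2 := by
    have hmaps : Set.MapsTo (mulCLM (fun θ => conj (u θ)) (memLinfty_conj hu.memLinfty))
        ((Submodule.map (mulCLM u hu.memLinfty).toLinearMap H2 : Submodule ℂ Ltwo) : Set Ltwo)
        ((H2 : Submodule ℂ Ltwo) : Set Ltwo) := by
      rintro x ⟨h, hh, rfl⟩
      show mulCLM _ _ (mulCLM u hu.memLinfty h) ∈ H2
      rw [mulCLM_conj_u_mulCLM_u (hu := hu)]
      exact hh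
    have := map_mem_closure (mulCLM (fun θ => conj (u θ))
      (memLinfty_conj hu.memLinfty)).continuous h1 hmaps
    rwa [isClosed_H2.closure_eq] at this
  refine u_coeff_exists_ne hu fun n hn => ?_
  rcases lt_or_ge n 0 with hneg | hpos
  · exact hu.negCoeff n hneg
  have h3 : ⇑(mulCLM (fun θ => conj (u θ)) (memLinfty_conj hu.memLinfty) (eF 0))
      =ᵐ[μ] fun θ => conj (u θ) := by
    filter_upwards [mulCLM_coeFn _ (memLinfty_conj hu.memLinfty) (eF 0), coeFn_fourierLp 2 0]
      with θ e1 e2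
    rw [e1, e2, fourier_zero, mul_one]
  have h4 := mem_H2_iff.mp h2 (-n) (by omega)
  rw [fourierCoeff_congr_ae h3, fourierCoeff_conj] at h4
  · rw [neg_neg] at h4
    simpa using h4
  · exact hu.meas
  · exact hu.memLinfty.integrable le_top

lemma pK_inner (n : ℤ) (g : KuSub u hu) :
    (inner ℂ (pK u hu n) g : ℂ) = fourierCoeff (⇑(↑g : Ltwo)) n := by
  rw [pK, Submodule.inner_orthogonalProjectionOnto_eq_of_mem_right (K := KuSub u hu) g (eF n), inner_eF]

lemma eq_zero_of_inner_pK {g : KuSub u hu}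
    (hg : ∀ n : ℕ, (inner ℂ (pK u hu (n : ℤ)) g : ℂ) = 0) : g = 0 := by
  have h1 : (↑g : Ltwo) = 0 := by
    refine eq_zero_of_fourierCoeff_eq_zero fun n => ?_
    rcases lt_or_ge n 0 with hn | hn
    · exact mem_H2_iff.mp (mem_H2_of_mem_KuSub g.2) n hn
    · rw [← pK_inner]
      have : ((n.toNat : ℕ) : ℤ) = n := Int.toNat_of_nonneg hn
      rw [← this]
      exact hg n.toNat
  exact Subtype.ext h1

end K4

theorem Az_irreducible_aux (u : T2π → ℂ) (hu : IsInner u) :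
    ∀ M : Submodule ℂ (KuSub u hu), IsClosed (M : Set (KuSub u hu)) →
      (∀ f ∈ M, Az u hu f ∈ M) →
      (∀ f ∈ M, ContinuousLinearMap.adjoint (Az u hu) f ∈ M) →
      M = ⊥ ∨ M = ⊤ := by
  intro M hMc hA hAadj
  haveI : CompleteSpace M := hMc.completeSpace_coe
  have hOA : ∀ y ∈ Mᗮ, Az u hu y ∈ Mᗮ := by
    intro y hy
    rw [Submodule.mem_orthogonal]
    intro f hf
    rw [← ContinuousLinearMap.adjoint_inner_left]
    exact (Submodule.mem_orthogonal _ _).mp hy _ (hAadj f hf)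
  have hOAadj : ∀ y ∈ Mᗮ, ContinuousLinearMap.adjoint (Az u hu) y ∈ Mᗮ := by
    intro y hy
    rw [Submodule.mem_orthogonal]
    intro f hf
    rw [ContinuousLinearMap.adjoint_inner_right]
    exact (Submodule.mem_orthogonal _ _).mp hy _ (hA f hf)
  have hκ : (inner ℂ (k0 u hu) (k0 u hu) : ℂ) ≠ 0 :=
    fun h => k0_ne_zero hu (inner_self_eq_zero.mp h)
  set m : KuSub u hu := ↑(Submodule.orthogonalProjectionOnto M (k0 u hu)) with hmdef
  have hm : m ∈ M := (Submodule.orthogonalProjectionOnto M (k0 u hu)).2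
  have hm' : k0 u hu - m ∈ Mᗮ := Submodule.sub_starProjection_mem_orthogonal (k0 u hu)
  have hrm : (inner ℂ (k0 u hu) m : ℂ) • k0 u hu ∈ M := by
    rw [← rankOne_identity]
    exact Submodule.sub_mem M hm (hA _ (hAadj _ hm))
  have hrm' : (inner ℂ (k0 u hu) (k0 u hu - m) : ℂ) • k0 u hu ∈ Mᗮ := by
    rw [← rankOne_identity]
    exact Submodule.sub_mem _ hm' (hOA _ (hOAadj _ hm'))
  by_cases ha : (inner ℂ (k0 u hu) m : ℂ) = 0
  · left
    have hb : (inner ℂ (k0 u hu) (k0 u hu - m) : ℂ) ≠ 0 := by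
      rw [inner_sub_right, ha, sub_zero]; exact hκ
    have hκM : k0 u hu ∈ Mᗮ := by
      have := Submodule.smul_mem Mᗮ (inner ℂ (k0 u hu) (k0 u hu - m) : ℂ)⁻¹ hrm'
      rwa [smul_smul, inv_mul_cancel₀ hb, one_smul] at this
    have hpK : ∀ n : ℕ, pK u hu (n : ℤ) ∈ Mᗮ := by
      intro n
      induction n with
      | zero => rw [show ((0:ℕ):ℤ) = 0 from rfl, ← k0_eq_pK]; exact hκM
      | succ n ih =>
        have h2 := hOA _ ih
        rwa [Az_pK (by exact_mod_cast Nat.zero_le n),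
          show ((n:ℤ)+1 = ((n+1:ℕ):ℤ)) by push_cast; ring] at h2
    refine (Submodule.eq_bot_iff M).mpr fun y hy => ?_
    refine eq_zero_of_inner_pK fun n => ?_
    rw [← inner_conj_symm, (Submodule.mem_orthogonal _ _).mp (hpK n) y hy, map_zero]
  · right
    have hκM : k0 u hu ∈ M := by
      have := Submodule.smul_mem M (inner ℂ (k0 u hu) m : ℂ)⁻¹ hrm
      rwa [smul_smul, inv_mul_cancel₀ ha, one_smul] at this
    have hpK : ∀ n : ℕ, pK u hu (n : ℤ) ∈ M := by
      intro n
      induction n with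
      | zero => rw [show ((0:ℕ):ℤ) = 0 from rfl, ← k0_eq_pK]; exact hκM
      | succ n ih =>
        have h2 := hA _ ih
        rwa [Az_pK (by exact_mod_cast Nat.zero_le n),
          show ((n:ℤ)+1 = ((n+1:ℕ):ℤ)) by push_cast; ring] at h2
    refine Submodule.eq_top_iff'.mpr fun y => ?_
    have hy0 : y - ↑(Submodule.orthogonalProjectionOnto M y) = 0 := by
      refine eq_zero_of_inner_pK fun n => ?_
      exact (Submodule.mem_orthogonal _ _).mp
        (Submodule.sub_starProjection_mem_orthogonal y) _ (hpK n)
    have hyy : y = ↑(Submodule.orthogonalProjectionOnto M y) := by rwa [sub_eq_zero] at hy0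
    rw [hyy]
    exact (Submodule.orthogonalProjectionOnto M y).2


/-- The compressed shift `A_z^u` is irreducible: the only closed subspaces of
`K_u` invariant under both `A_z^u` and its adjoint are `{0}` and `K_u`. -/
theorem Az_irreducible (u : T2π → ℂ) (hu : IsInner u) :
    ∀ M : Submodule ℂ (KuSub u hu), IsClosed (M : Set (KuSub u hu)) →
      (∀ f ∈ M, Az u hu f ∈ M) →
      (∀ f ∈ M, ContinuousLinearMap.adjoint (Az u hu) f ∈ M) →
      M = ⊥ ∨ M = ⊤ :=
  Az_irreducible_aux u hu

end TTOPaper
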